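/- Let t, j ∈ ℕ with j ≤ t, let σ > 0 and let α > 0 satisfy α(t+1) > 2. Then σ² + ∫_σ^∞ 2x · (σ/x)^{α(j+1)} · (2(σ/x)^α − (σ/x)^{2α})^{t−j} dx = ∑_{k=0}^{t−j} C(t−j, k) · 2^k · (−1)^{t−j−k} · σ² · α(2t+1−j−k)/(α(2t+1−j−k) − 2), where C(n,k) denotes the binomial coefficient. -/

import Mathlib

open Real MeasureTheory

private lemma pareto_aux_integrable (σ p : ℝ) (hσ : 0 < σ) (hp : 2 < p) :
    IntegrableOn (fun x => 2 * x * (σ / x) ^ p) (Set.Ioi σ) := by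
  have h : IntegrableOn (fun x : ℝ => x ^ (1 - p)) (Set.Ioi σ) :=
    integrableOn_Ioi_rpow_of_lt (by linarith) hσ
  refine IntegrableOn.congr_fun (h.const_mul (2 * σ ^ p)) (fun x hx => ?_) measurableSet_Ioi
  have hx' : 0 < x := lt_trans hσ hx
  rw [Real.div_rpow hσ.le hx'.le, Real.rpow_sub hx', Real.rpow_one]
  field_simp

private lemma pareto_aux_eval (σ p : ℝ) (hσ : 0 < σ) (hp : 2 < p) :
    ∫ x in Set.Ioi σ, 2 * x * (σ / x) ^ p = 2 * σ ^ 2 / (p - 2) := by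
  rw [setIntegral_congr_fun measurableSet_Ioi
    (g := fun x : ℝ => (2 * σ ^ p) * x ^ (1 - p)) ?_]
  · rw [MeasureTheory.integral_const_mul, integral_Ioi_rpow_of_lt (by linarith) hσ]
    have key : σ ^ p * σ ^ ((2 : ℝ) - p) = σ ^ 2 := by
      rw [← Real.rpow_natCast σ 2, ← Real.rpow_add hσ]; norm_num
    have h1 : (1 : ℝ) - p + 1 = 2 - p := by ring
    rw [h1]
    have h2 : -σ ^ ((2:ℝ) - p) / (2 - p) = σ ^ ((2:ℝ) - p) / (p - 2) := by
      rw [div_eq_div_iff (by linarith) (by linarith)]; ring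
    rw [h2]
    rw [show 2 * σ ^ p * (σ ^ ((2:ℝ) - p) / (p - 2)) = 2 * (σ ^ p * σ ^ ((2:ℝ)-p)) / (p - 2) by
      ring, key]
  · intro x hx
    have hx' : 0 < x := lt_trans hσ hx
    simp only
    rw [Real.div_rpow hσ.le hx'.le, Real.rpow_sub hx', Real.rpow_one]
    field_simp

private lemma pareto_aux_expand (y : ℝ) (hy : 0 < y) (a b : ℝ) (m : ℕ) :
    y ^ a * (2 * y ^ b - y ^ (2 * b)) ^ m
      = ∑ k ∈ Finset.range (m + 1), (m.choose k : ℝ) * 2 ^ k * (-1 : ℝ) ^ (m - k) *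
          y ^ (a + b * k + 2 * b * ((m - k : ℕ) : ℝ)) := by
  have h2 : y ^ (2 * b) = (y ^ b) ^ 2 := by
    rw [two_mul, Real.rpow_add hy, sq]
  rw [h2, show 2 * y ^ b - (y ^ b) ^ 2 = 2 * y ^ b + (-(y ^ b) ^ 2) by ring, add_pow,
    Finset.mul_sum]
  refine Finset.sum_congr rfl fun k hk => ?_
  rw [mul_pow, neg_pow, ← pow_mul]
  have e1 : (y ^ b) ^ k = y ^ (b * k) := by
    rw [← Real.rpow_natCast (y ^ b) k, ← Real.rpow_mul hy.le]
  have e2 : (y ^ b) ^ (2 * (m - k)) = y ^ (2 * b * ((m - k : ℕ) : ℝ)) := by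
    rw [← Real.rpow_natCast (y ^ b) (2 * (m - k)), ← Real.rpow_mul hy.le]
    push_cast
    ring_nf
  rw [e1, e2, show a + b * k + 2 * b * ((m - k : ℕ) : ℝ)
      = a + (b * k + 2 * b * ((m - k : ℕ) : ℝ)) by ring,
    Real.rpow_add hy, Real.rpow_add hy]
  ring

/-- Second-moment formula (equation (20)) for the type-`j` request service
time with `Pareto(σ, α)` servers:
`σ² + ∫_σ^∞ 2x (σ/x)^{α(j+1)} (2(σ/x)^α − (σ/x)^{2α})^{t−j} dx
  = ∑_{k=0}^{t−j} C(t−j,k) 2^k (−1)^{t−j−k} σ² α(2t+1−j−k)/(α(2t+1−j−k) − 2)`. -/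
theorem pareto_type_j_second_moment_formula (t j : ℕ) (hjt : j ≤ t)
    (σ α : ℝ) (hσ : 0 < σ) (hα : 0 < α) (hα2 : α * (t + 1) > 2) :
    σ ^ 2 + ∫ x in Set.Ioi σ,
        2 * x * ((σ / x) ^ (α * (j + 1)) *
          (2 * (σ / x) ^ α - (σ / x) ^ (2 * α)) ^ (t - j))
      = ∑ k ∈ Finset.range (t - j + 1),
          (t - j).choose k * 2 ^ k * (-1 : ℝ) ^ (t - j - k) * σ ^ 2 *
            (α * ((2 * t + 1 - j - k : ℕ) : ℝ)) /
              (α * ((2 * t + 1 - j - k : ℕ) : ℝ) - 2) := by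
  set m := t - j with hm
  set p : ℕ → ℝ := fun k => α * ((2 * t + 1 - j - k : ℕ) : ℝ) with hp
  set c : ℕ → ℝ := fun k => ((m.choose k : ℝ)) * 2 ^ k * (-1 : ℝ) ^ (m - k) with hc
  have hcast : ∀ k, k ≤ m → ((2 * t + 1 - j - k : ℕ) : ℝ) = 2 * (t:ℝ) + 1 - j - k := by
    intro k hk
    have h1 : 2 * t + 1 - j - k = 2 * t + 1 - (j + k) := by omega
    rw [h1, Nat.cast_sub (by omega)]
    push_cast; ring
  have hp2 : ∀ k, k ≤ m → 2 < p k := by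
    intro k hk
    have h1 : ((t:ℝ) + 1) ≤ ((2 * t + 1 - j - k : ℕ) : ℝ) := by
      rw [hcast k hk]
      have : (j:ℝ) ≤ t := by exact_mod_cast hjt
      have : (k:ℝ) ≤ (m:ℝ) := by exact_mod_cast hk
      have : (m:ℝ) = (t:ℝ) - j := by
        rw [hm, Nat.cast_sub hjt]
      linarith [(by exact_mod_cast hk : (k:ℝ) ≤ (m:ℝ)),
        (by rw [hm, Nat.cast_sub hjt] : (m:ℝ) = (t:ℝ) - j),
        (by exact_mod_cast hjt : (j:ℝ) ≤ (t:ℝ))]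
    calc (2:ℝ) < α * (t + 1) := hα2
      _ ≤ p k := by
          rw [hp]
          exact mul_le_mul_of_nonneg_left h1 hα.le
  -- exponent identity
  have hexp : ∀ k, k ≤ m →
      α * (j + 1) + α * k + 2 * α * ((m - k : ℕ) : ℝ) = p k := by
    intro k hk
    have h1 : ((m - k : ℕ) : ℝ) = (m:ℝ) - k := by rw [Nat.cast_sub hk]
    have h2 : (m:ℝ) = (t:ℝ) - j := by rw [hm, Nat.cast_sub hjt]
    rw [hp]
    simp only
    rw [hcast k hk, h1, h2]
    ring
  -- integrand equality on Ioi σ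
  have heq : Set.EqOn
      (fun x : ℝ => 2 * x * ((σ / x) ^ (α * (j + 1)) *
          (2 * (σ / x) ^ α - (σ / x) ^ (2 * α)) ^ m))
      (fun x : ℝ => ∑ k ∈ Finset.range (m + 1), c k * (2 * x * (σ / x) ^ (p k)))
      (Set.Ioi σ) := by
    intro x hx
    have hx' : 0 < σ / x := div_pos hσ (lt_trans hσ hx)
    simp only
    rw [pareto_aux_expand (σ / x) hx' (α * (j + 1)) α m, Finset.mul_sum]
    refine Finset.sum_congr rfl fun k hk => ?_
    have hk' : k ≤ m := Nat.lt_succ_iff.mp (Finset.mem_range.mp hk)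
    rw [show α * (j + 1) + α * k + 2 * α * ((m - k : ℕ) : ℝ) = p k from hexp k hk']
    rw [hc]; ring
  have hint : ∀ k ∈ Finset.range (m + 1),
      IntegrableOn (fun x : ℝ => c k * (2 * x * (σ / x) ^ (p k))) (Set.Ioi σ) := by
    intro k hk
    exact (pareto_aux_integrable σ (p k) hσ
      (hp2 k (Nat.lt_succ_iff.mp (Finset.mem_range.mp hk)))).const_mul (c k)
  rw [setIntegral_congr_fun measurableSet_Ioi heq, integral_finset_sum _ hint]
  have hterm : ∀ k ∈ Finset.range (m + 1),
      ∫ x in Set.Ioi σ, c k * (2 * x * (σ / x) ^ (p k))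
        = c k * (2 * σ ^ 2 / (p k - 2)) := by
    intro k hk
    rw [MeasureTheory.integral_const_mul,
      pareto_aux_eval σ (p k) hσ (hp2 k (Nat.lt_succ_iff.mp (Finset.mem_range.mp hk)))]
  rw [Finset.sum_congr rfl hterm]
  -- RHS algebra
  have hrhs : ∀ k ∈ Finset.range (m + 1),
      ((m.choose k : ℝ)) * 2 ^ k * (-1 : ℝ) ^ (m - k) * σ ^ 2 * (p k) / (p k - 2)
        = c k * σ ^ 2 + c k * (2 * σ ^ 2 / (p k - 2)) := by
    intro k hk
    have h2 : 2 < p k := hp2 k (Nat.lt_succ_iff.mp (Finset.mem_range.mp hk))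
    have hne : p k - 2 ≠ 0 := by linarith
    rw [hc]
    field_simp
    ring
  have hsum1 : ∑ k ∈ Finset.range (m + 1), c k = 1 := by
    calc ∑ k ∈ Finset.range (m + 1), c k
        = ∑ k ∈ Finset.range (m + 1), (2:ℝ) ^ k * (-1) ^ (m - k) * (m.choose k) :=
          Finset.sum_congr rfl fun k _ => by rw [hc]; ring
      _ = ((2:ℝ) + (-1)) ^ m := (add_pow _ _ _).symm
      _ = 1 := by norm_num
  calc σ ^ 2 + ∑ k ∈ Finset.range (m + 1), c k * (2 * σ ^ 2 / (p k - 2))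
      = (∑ k ∈ Finset.range (m + 1), c k) * σ ^ 2
        + ∑ k ∈ Finset.range (m + 1), c k * (2 * σ ^ 2 / (p k - 2)) := by
        rw [hsum1, one_mul]
    _ = ∑ k ∈ Finset.range (m + 1),
          (c k * σ ^ 2 + c k * (2 * σ ^ 2 / (p k - 2))) := by
        rw [Finset.sum_add_distrib, Finset.sum_mul]
    _ = ∑ k ∈ Finset.range (m + 1),
          ((m.choose k : ℝ)) * 2 ^ k * (-1 : ℝ) ^ (m - k) * σ ^ 2 * (p k) / (p k - 2) := by
        exact (Finset.sum_congr rfl hrhs).symm
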